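/- Let T_1 and T_2 be real random variables with the same continuous marginal distribution function F satisfying F(x) < 1 for all x, and define Δ(c) = (Pr(T_1 ≥ c) + Pr(T_2 ≥ c) − Pr(max(T_1,T_2) ≥ c))/(Pr(T_1 ≥ c) + Pr(T_2 ≥ c)). Suppose the upper tail dependence coefficient λ_U = lim_{u↑1} Pr(T_1 ≥ F^{-1}(u) | T_2 ≥ F^{-1}(u)) exists, where F^{-1}(u) = inf{x : F(x) ≥ u} is the quantile function. Then lim_{c→+∞} Δ(c) = λ_U/2. In particular, Δ(c) → 0 as c → +∞ if and only if T_1 and T_2 are upper tail-independent (λ_U = 0). -/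

import Mathlib

open Filter MeasureTheory Real Topology

lemma surv_aux {Ω : Type*} [MeasurableSpace Ω] (P : Measure Ω) [IsProbabilityMeasure P]
    (T : Ω → ℝ) (hT : Measurable T) (F : ℝ → ℝ)
    (hF : ∀ x, F x = (P {ω | T ω ≤ x}).toReal) (hFcont : Continuous F) (x : ℝ) :
    (P {ω | x ≤ T ω}).toReal = 1 - F x := by
  have hlt : (P {ω | T ω < x}).toReal = F x := by
    apply le_antisymm
    · rw [hF]
      exact ENNReal.toReal_mono (measure_ne_top _ _)
        (measure_mono fun ω (h : T ω < x) => le_of_lt h)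
    · have htend : Tendsto (fun n : ℕ => F (x - 1/(n+1))) atTop (𝓝 (F x)) := by
        apply (hFcont.tendsto x).comp
        have h0 : Tendsto (fun n : ℕ => 1/((n:ℝ)+1)) atTop (𝓝 0) :=
          tendsto_one_div_add_atTop_nhds_zero_nat
        have h1 : Tendsto (fun _ : ℕ => x) atTop (𝓝 x) := tendsto_const_nhds
        simpa using h1.sub h0
      apply le_of_tendsto htend
      filter_upwards with n
      rw [hF]
      apply ENNReal.toReal_mono (measure_ne_top _ _)
      apply measure_mono
      intro ω (h : T ω ≤ x - 1/(n+1))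
      have : (0:ℝ) < 1/((n:ℝ)+1) := by positivity
      show T ω < x
      linarith
  have hms : MeasurableSet {ω | T ω < x} := hT measurableSet_Iio
  have hcompl : {ω | x ≤ T ω} = {ω | T ω < x}ᶜ := by
    ext ω; simp [not_lt]
  rw [hcompl, measure_compl hms (measure_ne_top _ _), measure_univ,
    ENNReal.toReal_sub_of_le prob_le_one ENNReal.one_ne_top, ENNReal.toReal_one, hlt]

lemma cdf_tendsto_one {Ω : Type*} [MeasurableSpace Ω] (P : Measure Ω) [IsProbabilityMeasure P]
    (T : Ω → ℝ) (F : ℝ → ℝ) (hF : ∀ x, F x = (P {ω | T ω ≤ x}).toReal)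
    (hFmono : Monotone F) (hFle : ∀ x, F x ≤ 1) :
    Tendsto F atTop (𝓝 1) := by
  have hseq : Tendsto (fun n : ℕ => F n) atTop (𝓝 1) := by
    have hm : Monotone (fun n : ℕ => {ω | T ω ≤ (n : ℝ)}) := by
      intro n m hnm ω (h : T ω ≤ n)
      exact h.trans (by exact_mod_cast hnm)
    have hU : (⋃ n : ℕ, {ω | T ω ≤ (n : ℝ)}) = Set.univ := by
      ext ω
      simp only [Set.mem_iUnion, Set.mem_univ, iff_true]
      obtain ⟨n, hn⟩ := exists_nat_ge (T ω)
      exact ⟨n, hn⟩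
    have := tendsto_measure_iUnion_atTop (μ := P) hm
    rw [hU, measure_univ] at this
    have ht := (ENNReal.tendsto_toReal ENNReal.one_ne_top).comp this
    simpa [Function.comp_def, hF] using ht
  rw [Metric.tendsto_atTop]
  intro ε hε
  rw [Metric.tendsto_atTop] at hseq
  obtain ⟨N, hN⟩ := hseq ε hε
  refine ⟨N, fun x hx => ?_⟩
  have h1 := hN N le_rfl
  have h2 : F N ≤ F x := hFmono hx
  have h3 : F x ≤ 1 := hFle x
  rw [Real.dist_eq] at h1 ⊢
  rw [abs_lt] at h1 ⊢
  constructor <;> [linarith; linarith]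

lemma cdf_small {Ω : Type*} [MeasurableSpace Ω] (P : Measure Ω) [IsProbabilityMeasure P]
    (T : Ω → ℝ) (hT : Measurable T) (F : ℝ → ℝ)
    (hF : ∀ x, F x = (P {ω | T ω ≤ x}).toReal) :
    ∃ x₀ : ℝ, F x₀ < 1/2 := by
  have hm : Antitone (fun n : ℕ => {ω | T ω ≤ -(n : ℝ)}) := by
    intro n m hnm ω (h : T ω ≤ -(m:ℝ))
    refine h.trans (by simp; exact_mod_cast hnm)
  have hI : (⋂ n : ℕ, {ω | T ω ≤ -(n : ℝ)}) = ∅ := by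
    ext ω
    simp only [Set.mem_iInter, Set.mem_empty_iff_false, iff_false, not_forall]
    obtain ⟨n, hn⟩ := exists_nat_gt (-(T ω))
    exact ⟨n, by simp; linarith⟩
  have h := tendsto_measure_iInter_atTop (μ := P)
    (fun n => (hT measurableSet_Iic).nullMeasurableSet) hm ⟨0, measure_ne_top _ _⟩
  rw [show (⋂ n : ℕ, T ⁻¹' Set.Iic (-(n:ℝ))) = ∅ from hI, measure_empty] at h
  have ht := (ENNReal.tendsto_toReal ENNReal.zero_ne_top).comp h
  simp only [Function.comp, ENNReal.toReal_zero] at ht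
  have := ht.eventually (eventually_lt_nhds (by norm_num : (0:ℝ) < 1/2))
  obtain ⟨n, hn⟩ := this.exists
  exact ⟨-(n:ℝ), by rw [hF]; exact hn⟩


/-- Let `T₁, T₂` have the same continuous marginal distribution
function `F` with `F x < 1` for all `x`, and let
`Δ(c) = (Pr(T₁≥c) + Pr(T₂≥c) - Pr(max(T₁,T₂)≥c)) / (Pr(T₁≥c) + Pr(T₂≥c))`.
If the upper tail dependence coefficient
`λ_U = lim_{u↑1} Pr(T₁ ≥ F⁻¹(u) | T₂ ≥ F⁻¹(u))` exists, where
`F⁻¹(u) = inf{x : F(x) ≥ u}`, then `lim_{c→∞} Δ(c) = λ_U/2`; in particular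
`Δ(c) → 0` iff `T₁, T₂` are upper tail-independent (`λ_U = 0`). -/
theorem relative_error_upper_tail_dependence
    {Ω : Type*} [MeasurableSpace Ω] (P : Measure Ω) [IsProbabilityMeasure P]
    (T₁ T₂ : Ω → ℝ) (hT₁ : Measurable T₁) (hT₂ : Measurable T₂)
    (F : ℝ → ℝ)
    (hF₁ : ∀ x, F x = (P {ω | T₁ ω ≤ x}).toReal)
    (hF₂ : ∀ x, F x = (P {ω | T₂ ω ≤ x}).toReal)
    (hFcont : Continuous F) (hFlt : ∀ x, F x < 1)
    (Finv : ℝ → ℝ) (hFinv : ∀ u, Finv u = sInf {x : ℝ | u ≤ F x})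
    (Δ : ℝ → ℝ)
    (hΔ : ∀ c, Δ c =
      ((P {ω | c ≤ T₁ ω}).toReal + (P {ω | c ≤ T₂ ω}).toReal -
          (P {ω | c ≤ max (T₁ ω) (T₂ ω)}).toReal) /
        ((P {ω | c ≤ T₁ ω}).toReal + (P {ω | c ≤ T₂ ω}).toReal))
    (lamU : ℝ)
    (hlamU : Tendsto
      (fun u => (P {ω | Finv u ≤ T₁ ω ∧ Finv u ≤ T₂ ω}).toReal /
        (P {ω | Finv u ≤ T₂ ω}).toReal)
      (nhdsWithin 1 (Set.Iio 1)) (nhds lamU)) :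
    Tendsto Δ atTop (nhds (lamU / 2)) ∧
    (Tendsto Δ atTop (nhds 0) ↔ lamU = 0) := by
  have hFmono : Monotone F := by
    intro x y hxy
    rw [hF₁ x, hF₁ y]
    exact ENNReal.toReal_mono (measure_ne_top _ _)
      (measure_mono fun ω (h : T₁ ω ≤ x) => h.trans hxy)
  have hFle : ∀ x, F x ≤ 1 := fun x => (hFlt x).le
  have surv₁ : ∀ x, (P {ω | x ≤ T₁ ω}).toReal = 1 - F x := surv_aux P T₁ hT₁ F hF₁ hFcont
  have surv₂ : ∀ x, (P {ω | x ≤ T₂ ω}).toReal = 1 - F x := surv_aux P T₂ hT₂ F hF₂ hFcont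
  have hFtop : Tendsto F atTop (𝓝 1) := cdf_tendsto_one P T₁ F hF₁ hFmono hFle
  obtain ⟨x₀, hx₀⟩ := cdf_small P T₁ hT₁ F hF₁
  set g : ℝ → ℝ := fun u => (P {ω | Finv u ≤ T₁ ω ∧ Finv u ≤ T₂ ω}).toReal /
        (P {ω | Finv u ≤ T₂ ω}).toReal with hg
  have key : ∀ c, 1/2 ≤ F c → Δ c = g (F c) / 2 := by
    intro c hc
    set a := Finv (F c) with ha
    have hFca : F c ≤ F a ∧ a ≤ c := by
      have hSne : c ∈ {x | F c ≤ F x} := by simp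
      have hSbdd : BddBelow {x | F c ≤ F x} := by
        refine ⟨x₀, fun x hx => ?_⟩
        by_contra hlt
        push_neg at hlt
        have := hFmono hlt.le
        simp only [Set.mem_setOf_eq] at hx
        linarith
      have hclosed : IsClosed {x | F c ≤ F x} := isClosed_le continuous_const hFcont
      have hmem := hclosed.csInf_mem ⟨c, hSne⟩ hSbdd
      constructor
      · rw [ha, hFinv]; exact hmem
      · rw [ha, hFinv]; exact csInf_le hSbdd hSne
    obtain ⟨hFca, hac⟩ := hFca
    have hFa : F a = F c := le_antisymm (hFmono hac) hFca
    have hEq : ∀ (T : Ω → ℝ), (∀ x, (P {ω | x ≤ T ω}).toReal = 1 - F x) →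
        P {ω | a ≤ T ω} = P {ω | c ≤ T ω} := by
      intro T hs
      have : (P {ω | a ≤ T ω}).toReal = (P {ω | c ≤ T ω}).toReal := by
        rw [hs, hs, hFa]
      exact (ENNReal.toReal_eq_toReal_iff' (measure_ne_top _ _) (measure_ne_top _ _)).mp this
    have hE1 := hEq T₁ surv₁
    have hE2 := hEq T₂ surv₂
    have hd : ∀ (T : Ω → ℝ), Measurable T → P {ω | a ≤ T ω} = P {ω | c ≤ T ω} →
        P ({ω | a ≤ T ω} \ {ω | c ≤ T ω}) = 0 := by
      intro T hT he
      have hsub2 : {ω | c ≤ T ω} ⊆ {ω | a ≤ T ω} := fun ω h => hac.trans h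
      rw [measure_diff hsub2 (hT measurableSet_Ici).nullMeasurableSet (measure_ne_top _ _),
        he, tsub_self]
    have hjoint : P {ω | a ≤ T₁ ω ∧ a ≤ T₂ ω} = P {ω | c ≤ T₁ ω ∧ c ≤ T₂ ω} := by
      apply le_antisymm
      · have hsub : {ω | a ≤ T₁ ω ∧ a ≤ T₂ ω} ⊆
            {ω | c ≤ T₁ ω ∧ c ≤ T₂ ω} ∪
              (({ω | a ≤ T₁ ω} \ {ω | c ≤ T₁ ω}) ∪ ({ω | a ≤ T₂ ω} \ {ω | c ≤ T₂ ω})) := by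
          rintro ω ⟨h1, h2⟩
          by_cases hc1 : c ≤ T₁ ω
          · by_cases hc2 : c ≤ T₂ ω
            · exact Or.inl ⟨hc1, hc2⟩
            · exact Or.inr (Or.inr ⟨h2, hc2⟩)
          · exact Or.inr (Or.inl ⟨h1, hc1⟩)
        have hz : P (({ω | a ≤ T₁ ω} \ {ω | c ≤ T₁ ω}) ∪
            ({ω | a ≤ T₂ ω} \ {ω | c ≤ T₂ ω})) = 0 :=
          measure_union_null (hd T₁ hT₁ hE1) (hd T₂ hT₂ hE2)
        refine le_trans (measure_mono hsub) (le_trans (measure_union_le _ _) ?_)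
        rw [hz, add_zero]
      · exact measure_mono fun ω ⟨h1, h2⟩ => ⟨hac.trans h1, hac.trans h2⟩
    have hmaxset : {ω | c ≤ max (T₁ ω) (T₂ ω)} = {ω | c ≤ T₁ ω} ∪ {ω | c ≤ T₂ ω} := by
      ext ω; simp [le_max_iff, Set.mem_union]
    have hinter : {ω | c ≤ T₁ ω} ∩ {ω | c ≤ T₂ ω} = {ω | c ≤ T₁ ω ∧ c ≤ T₂ ω} := rfl
    have hIE : (P {ω | c ≤ max (T₁ ω) (T₂ ω)}).toReal =
        (P {ω | c ≤ T₁ ω}).toReal + (P {ω | c ≤ T₂ ω}).toReal -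
          (P {ω | c ≤ T₁ ω ∧ c ≤ T₂ ω}).toReal := by
      have hmB : MeasurableSet {ω | c ≤ T₂ ω} := hT₂ measurableSet_Ici
      have h := measure_union_add_inter (μ := P) {ω | c ≤ T₁ ω} hmB
      have h' := congrArg ENNReal.toReal h
      rw [ENNReal.toReal_add (measure_ne_top _ _) (measure_ne_top _ _),
        ENNReal.toReal_add (measure_ne_top _ _) (measure_ne_top _ _), hinter] at h'
      rw [hmaxset]
      linarith [h']
    have hgc : g (F c) = (P {ω | c ≤ T₁ ω ∧ c ≤ T₂ ω}).toReal / (1 - F c) := by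
      rw [hg]
      simp only
      rw [← ha, hjoint, surv₂ a, hFa]
    have h1c : (1:ℝ) - F c ≠ 0 := sub_ne_zero.mpr (hFlt c).ne'
    rw [hΔ c, hIE, surv₁ c, surv₂ c, hgc]
    have hnum : (1 - F c) + (1 - F c) - ((1 - F c) + (1 - F c) -
        (P {ω | c ≤ T₁ ω ∧ c ≤ T₂ ω}).toReal) = (P {ω | c ≤ T₁ ω ∧ c ≤ T₂ ω}).toReal := by ring
    rw [hnum, div_div]
    congr 1
    ring
  have hFtend : Tendsto F atTop (𝓝[<] (1:ℝ)) := by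
    apply tendsto_nhdsWithin_of_tendsto_nhds_of_eventually_within _ hFtop
    filter_upwards with x using hFlt x
  have hmain : Tendsto Δ atTop (𝓝 (lamU / 2)) := by
    have h1 : Tendsto (fun c => g (F c) / 2) atTop (𝓝 (lamU / 2)) :=
      (hlamU.comp hFtend).div_const 2
    apply h1.congr'
    filter_upwards [hFtop.eventually (eventually_ge_nhds (by norm_num : (1:ℝ)/2 < 1))] with c hc
    exact (key c hc).symm
  refine ⟨hmain, ?_, ?_⟩
  · intro h
    have := tendsto_nhds_unique h hmain
    linarith
  · intro h
    rw [h] at hmain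
    simpa using hmain
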